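/- Let K_X be a generalized number lattice on a finite set X, i.e., K_X = L_X + V_X where L_X is a number lattice (the set of integer linear combinations of finitely many rational vectors) and V_X is a rational vector space. Then K_X can be rewritten as K_X = L'_X + V_X where L'_X is a number lattice contained in the orthogonal complement of V_X; moreover in this orthogonal decomposition both L'_X and V_X are uniquely determined by K_X. -/

import Mathlib

open scoped Pointwise

/-- A number lattice: the set of integer linear combinations of finitely many vectors. -/
def IsNumLat {M : Type*} [AddCommGroup M] [Module ℚ M] (L : Set M) : Prop :=
  ∃ (n : ℕ) (b : Fin n → M), L = {x | ∃ l : Fin n → ℤ, x = ∑ i, (l i : ℚ) • b i}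

namespace StmtAux

variable {X : Type*} [Fintype X]

/-- The set of integer combinations of the family `c`. -/
def latSet {M : Type*} [AddCommGroup M] [Module ℚ M] {m : ℕ} (c : Fin m → M) : Set M :=
  {x | ∃ l : Fin m → ℤ, x = ∑ i, (l i : ℚ) • c i}

/-- The standard bilinear form on `X → ℚ`. -/
noncomputable def Bf (X : Type*) [Fintype X] : LinearMap.BilinForm ℚ (X → ℚ) :=
  LinearMap.mk₂ ℚ (fun l v => ∑ x, l x * v x)
    (fun a b c => by simp [add_mul, Finset.sum_add_distrib])
    (fun r a b => by simp [Finset.mul_sum, mul_assoc])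
    (fun a b c => by simp [mul_add, Finset.sum_add_distrib])
    (fun r a b => by simp [Finset.mul_sum, mul_left_comm])

lemma Bf_apply (l v : X → ℚ) : Bf X l v = ∑ x, l x * v x := rfl

lemma Bf_symm (l v : X → ℚ) : Bf X l v = Bf X v l :=
  Finset.sum_congr rfl fun x _ => mul_comm _ _

lemma Bf_refl : (Bf X).IsRefl := fun l v h => by rw [Bf_symm]; exact h

lemma Bf_def {v : X → ℚ} (h : Bf X v v = 0) : v = 0 := by
  funext x
  have h' := (Finset.sum_eq_zero_iff_of_nonneg (fun x _ => mul_self_nonneg (v x))).1 h x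
    (Finset.mem_univ x)
  have := mul_self_eq_zero.1 h'
  simpa using this

lemma compl (W : Submodule ℚ (X → ℚ)) : IsCompl W ((Bf X).orthogonal W) := by
  refine ((Bf X).restrict_nondegenerate_iff_isCompl_orthogonal Bf_refl).1 ?_
  refine ⟨fun w hw => ?_, fun w hw => ?_⟩ <;> exact Subtype.ext (Bf_def (hw w))

/-- Projection onto the orthogonal complement of `W`, along `W`. -/
noncomputable def pr (W : Submodule ℚ (X → ℚ)) : (X → ℚ) →ₗ[ℚ] (X → ℚ) :=
  ((Bf X).orthogonal W).subtype.comp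
    (Submodule.projectionOnto _ W (compl W).symm)

lemma pr_mem (W : Submodule ℚ (X → ℚ)) (e : X → ℚ) : pr W e ∈ (Bf X).orthogonal W :=
  (Submodule.projectionOnto _ W (compl W).symm e).2

lemma pr_fix (W : Submodule ℚ (X → ℚ)) {e : X → ℚ} (he : e ∈ (Bf X).orthogonal W) :
    pr W e = e := by
  have := Submodule.projectionOnto_apply_left (compl W).symm ⟨e, he⟩
  simpa [pr] using congrArg (Submodule.subtype _) this

lemma pr_zero (W : Submodule ℚ (X → ℚ)) {e : X → ℚ} (he : e ∈ W) : pr W e = 0 := by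
  have := Submodule.projectionOnto_apply_of_mem_right (compl W).symm he
  simpa [pr] using congrArg (Submodule.subtype _) this

lemma sub_pr_mem (W : Submodule ℚ (X → ℚ)) (e : X → ℚ) : e - pr W e ∈ W := by
  have he : e ∈ ((Bf X).orthogonal W) ⊔ W := by
    rw [(compl W).symm.sup_eq_top]; trivial
  obtain ⟨p, hp, w, hw, rfl⟩ := Submodule.mem_sup.1 he
  have : pr W (p + w) = p := by
    rw [map_add, pr_fix W hp, pr_zero W hw, add_zero]
  rw [this]
  simpa using hw

lemma mem_orthogonal_of {W : Submodule ℚ (X → ℚ)} {l : X → ℚ}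
    (h : ∀ v ∈ W, ∑ x, l x * v x = 0) : l ∈ (Bf X).orthogonal W := by
  intro v hv
  show Bf X v l = 0
  rw [← Bf_symm, Bf_apply]
  exact h v hv

lemma orth_sum {W : Submodule ℚ (X → ℚ)} {l : X → ℚ} (h : l ∈ (Bf X).orthogonal W) :
    ∀ v ∈ W, ∑ x, l x * v x = 0 := by
  intro v hv
  have h0 : Bf X v l = 0 := h v hv
  rw [Bf_symm, Bf_apply] at h0
  exact h0

/-- Divisibility lemma: only `0` is infinitely divisible inside a number lattice. -/
lemma div0 {m : ℕ} (c : Fin m → (X → ℚ)) (d : X → ℚ)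
    (h : ∀ α : ℚ, α • d ∈ latSet c) : d = 0 := by
  by_contra hd
  obtain ⟨x, hx⟩ : ∃ x, d x ≠ 0 := by
    by_contra hno
    push_neg at hno
    exact hd (funext hno)
  set D : ℚ := ∏ i, ((c i x).den : ℚ) with hD
  have hDne : D ≠ 0 := by
    refine Finset.prod_ne_zero_iff.2 fun i _ => ?_
    exact_mod_cast (c i x).den_nz
  have hint : ∀ i : Fin m, ∃ z : ℤ, c i x * D = (z : ℚ) := by
    intro i
    refine ⟨(c i x).num * ∏ j ∈ Finset.univ.erase i, ((c j x).den : ℤ), ?_⟩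
    have hsplit : D = ((c i x).den : ℚ) * ∏ j ∈ Finset.univ.erase i, ((c j x).den : ℚ) :=
      (Finset.mul_prod_erase Finset.univ _ (Finset.mem_univ i)).symm
    have hden : ((c i x).den : ℚ) ≠ 0 := by exact_mod_cast (c i x).den_nz
    have hnum : c i x * ((c i x).den : ℚ) = ((c i x).num : ℚ) := by
      have h1 : ((c i x).num : ℚ) / ((c i x).den : ℚ) * ((c i x).den : ℚ) = ((c i x).num : ℚ) :=
        div_mul_cancel₀ _ hden
      rw [Rat.num_div_den] at h1
      exact h1
    rw [hsplit, ← mul_assoc, hnum]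
    push_cast
    ring
  obtain ⟨l, hl⟩ := h (D⁻¹ * (d x)⁻¹ * (1 / 2))
  have hval := congrFun hl x
  simp only [Pi.smul_apply, smul_eq_mul] at hval
  -- multiply both sides by D
  have hsum : (∑ i, (l i : ℚ) • c i) x = ∑ i, (l i : ℚ) * c i x := by
    simp [Finset.sum_apply]
  rw [hsum] at hval
  have hval' : (D⁻¹ * (d x)⁻¹ * (1 / 2)) * d x * D = (∑ i, (l i : ℚ) * c i x) * D :=
    congrArg (fun t => t * D) hval
  have hleft : (D⁻¹ * (d x)⁻¹ * (1 / 2)) * d x * D = 1 / 2 := by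
    field_simp
  choose z hz using hint
  have hright : (∑ i, (l i : ℚ) * c i x) * D = ((∑ i, l i * z i : ℤ) : ℚ) := by
    rw [Finset.sum_mul]
    push_cast
    refine Finset.sum_congr rfl fun i _ => ?_
    rw [mul_assoc, hz i]
  have : ((∑ i, l i * z i : ℤ) : ℚ) = 1 / 2 := by
    rw [← hright, ← hval', hleft]
  have h2 : (2 : ℚ) * ((∑ i, l i * z i : ℤ) : ℚ) = 1 := by rw [this]; norm_num
  have h3 : (2 * ∑ i, l i * z i : ℤ) = 1 := by exact_mod_cast h2
  omega

/-- Key lemma about an orthogonal decomposition `K = latSet c + W`. -/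
lemma key {K : Set (X → ℚ)} {W : Submodule ℚ (X → ℚ)} {m : ℕ} {c : Fin m → (X → ℚ)}
    (hK : K = latSet c + (W : Set (X → ℚ)))
    (horth : ∀ l ∈ latSet c, ∀ v ∈ W, ∑ x, l x * v x = 0) :
    (∀ e ∈ K, pr W e ∈ latSet c ∧ e - pr W e ∈ W) ∧
    (W : Set (X → ℚ)) = {d | ∀ α : ℚ, α • d ∈ K} := by
  have hLsub : ∀ l ∈ latSet c, l ∈ (Bf X).orthogonal W :=
    fun l hl => mem_orthogonal_of (horth l hl)
  have hF : ∀ e ∈ K, pr W e ∈ latSet c ∧ e - pr W e ∈ W := by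
    intro e he
    rw [hK] at he
    obtain ⟨l, hl, v, hv, rfl⟩ := Set.mem_add.1 he
    have hpr : pr W (l + v) = l := by
      rw [map_add, pr_fix W (hLsub l hl), pr_zero W hv, add_zero]
    rw [hpr]
    exact ⟨hl, by simpa using hv⟩
  refine ⟨hF, Set.Subset.antisymm ?_ ?_⟩
  · intro w hw α
    rw [hK]
    refine Set.mem_add.2 ⟨0, ⟨fun _ => 0, by simp⟩, α • w, Submodule.smul_mem _ _ hw, by simp⟩
  · intro d hd
    have hpr0 : pr W d = 0 := by
      refine div0 c (pr W d) fun α => ?_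
      have := (hF (α • d) (hd α)).1
      rwa [map_smul] at this
    have h1 := hF _ (hd 1)
    rw [one_smul] at h1
    have h2 := h1.2
    rw [hpr0, sub_zero] at h2
    exact h2

end StmtAux

open StmtAux in
theorem stmt0 {X : Type*} [Fintype X] (K L : Set (X → ℚ)) (V : Submodule ℚ (X → ℚ))
    (hL : IsNumLat L) (hK : K = L + (V : Set (X → ℚ))) :
    ∃ L' : Set (X → ℚ), IsNumLat L' ∧ K = L' + (V : Set (X → ℚ)) ∧
      (∀ l ∈ L', ∀ v ∈ V, ∑ x, l x * v x = 0) ∧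
      (∀ (L₂ : Set (X → ℚ)) (V₂ : Submodule ℚ (X → ℚ)), IsNumLat L₂ →
        K = L₂ + (V₂ : Set (X → ℚ)) → (∀ l ∈ L₂, ∀ v ∈ V₂, ∑ x, l x * v x = 0) →
        L₂ = L' ∧ V₂ = V) := by
  obtain ⟨n, b, rfl⟩ := hL
  set b' : Fin n → (X → ℚ) := fun i => pr V (b i) with hb'
  have hK' : K = latSet b' + (V : Set (X → ℚ)) := by
    rw [hK]
    ext e
    constructor
    · rintro he
      obtain ⟨l, ⟨li, rfl⟩, v, hv, rfl⟩ := Set.mem_add.1 he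
      refine Set.mem_add.2 ⟨∑ i, (li i : ℚ) • b' i, ⟨li, rfl⟩,
        (∑ i, (li i : ℚ) • (b i - b' i)) + v, ?_, ?_⟩
      · exact V.add_mem (Submodule.sum_mem _ fun i _ =>
          Submodule.smul_mem _ _ (sub_pr_mem V (b i))) hv
      · rw [← add_assoc, ← Finset.sum_add_distrib]
        congr 1
        refine Finset.sum_congr rfl fun i _ => ?_
        rw [← smul_add, add_sub_cancel]
    · rintro he
      obtain ⟨l, ⟨li, rfl⟩, v, hv, rfl⟩ := Set.mem_add.1 he
      refine Set.mem_add.2 ⟨∑ i, (li i : ℚ) • b i, ⟨li, rfl⟩,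
        v - ∑ i, (li i : ℚ) • (b i - b' i), ?_, ?_⟩
      · exact V.sub_mem hv (Submodule.sum_mem _ fun i _ =>
          Submodule.smul_mem _ _ (sub_pr_mem V (b i)))
      · have : ∑ i, (li i : ℚ) • b i = (∑ i, (li i : ℚ) • b' i) + ∑ i, (li i : ℚ) • (b i - b' i) := by
          rw [← Finset.sum_add_distrib]
          refine Finset.sum_congr rfl fun i _ => ?_
          rw [← smul_add, add_sub_cancel]
        rw [this]
        abel
  have horth' : ∀ l ∈ latSet b', ∀ v ∈ V, ∑ x, l x * v x = 0 := by
    rintro l ⟨li, rfl⟩ v hv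
    have hmem : (∑ i, (li i : ℚ) • b' i) ∈ (Bf X).orthogonal V :=
      Submodule.sum_mem _ fun i _ => Submodule.smul_mem _ _ (pr_mem V (b i))
    exact orth_sum hmem v hv
  refine ⟨latSet b', ⟨n, b', rfl⟩, hK', horth', ?_⟩
  intro L₂ V₂ hL₂ hK₂ horth₂
  obtain ⟨mm, c, rfl⟩ := hL₂
  have hK₂' : K = latSet c + (V₂ : Set (X → ℚ)) := hK₂
  obtain ⟨F', hV'⟩ := key hK' horth'
  obtain ⟨F₂, hV₂⟩ := key hK₂' horth₂
  have hVeq : V₂ = V := by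
    apply SetLike.coe_injective
    rw [hV₂, hV']
  subst hVeq
  constructor
  · apply Set.Subset.antisymm
    · intro l hl
      have hlK : l ∈ K := by
        rw [hK₂']
        exact Set.mem_add.2 ⟨l, hl, 0, Submodule.zero_mem _, by simp⟩
      have h1 := (F' l hlK).1
      have hfix : pr V₂ l = l := pr_fix V₂ (mem_orthogonal_of (horth₂ l hl))
      rwa [hfix] at h1
    · intro l hl
      have hlK : l ∈ K := by
        rw [hK']
        exact Set.mem_add.2 ⟨l, hl, 0, Submodule.zero_mem _, by simp⟩
      have h1 := (F₂ l hlK).1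
      have hfix : pr V₂ l = l := pr_fix V₂ (mem_orthogonal_of (horth' l hl))
      rwa [hfix] at h1
  · rfl
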